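/- Let S = (N, D) be a finite linear space, i.e., N is a finite set of points and D is a collection of subsets of N (called lines) such that every line contains at least two points and any two distinct points of N lie on exactly one common line. Let v = |N| be the number of points and b = |D| the number of lines. If b > 1, then b ≥ v. -/
import Mathlib


/-- **De Bruijn–Erdős inequality.** In a finite linear space `(N, D)` — every
line is a subset of `N` with at least two points, and any two distinct points
lie on exactly one common line — if the number of lines `b = |D|` exceeds `1`,
then `b ≥ v = |N|`. -/
theorem deBruijn_erdos_inequality {α : Type*} [DecidableEq α]
    (N : Finset α) (D : Finset (Finset α))
    (hsub : ∀ ℓ ∈ D, ℓ ⊆ N)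
    (hcard : ∀ ℓ ∈ D, 2 ≤ ℓ.card)
    (hunique : ∀ p ∈ N, ∀ q ∈ N, p ≠ q → ∃! ℓ, ℓ ∈ D ∧ p ∈ ℓ ∧ q ∈ ℓ)
    (hb : 1 < D.card) :
    N.card ≤ D.card := by
  classical
  obtain ⟨l₁, hl₁, l₂, hl₂, hne⟩ : ∃ l₁ ∈ D, ∃ l₂ ∈ D, l₁ ≠ l₂ :=
    Finset.one_lt_card.mp hb
  -- uniqueness consequence
  have huniq : ∀ {p q : α} {m m' : Finset α}, p ∈ N → q ∈ N → p ≠ q →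
      m ∈ D → p ∈ m → q ∈ m → m' ∈ D → p ∈ m' → q ∈ m' → m = m' := by
    intro p q m m' hp hq hpq hm hpm hqm hm' hpm' hqm'
    obtain ⟨ℓ, -, hu⟩ := hunique p hp q hq hpq
    rw [hu m ⟨hm, hpm, hqm⟩, hu m' ⟨hm', hpm', hqm'⟩]
  -- no line contains all points
  have hproper : ∀ m ∈ D, ∃ x ∈ N, x ∉ m := by
    intro m hm
    by_contra h
    push_neg at h
    -- pick another line
    obtain ⟨m', hm', hmm'⟩ : ∃ m' ∈ D, m ≠ m' := by
      rcases eq_or_ne m l₁ with rfl | h1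
      · exact ⟨l₂, hl₂, hne⟩
      · exact ⟨l₁, hl₁, fun e => h1 e⟩
    obtain ⟨p, hp, q, hq, hpq⟩ := Finset.one_lt_card.mp (hcard m' hm')
    exact hmm' (huniq (hsub m' hm' hp) (hsub m' hm' hq) hpq hm
      (h p (hsub m' hm' hp)) (h q (hsub m' hm' hq)) hm' hp hq)
  -- every point misses some line
  have hmiss : ∀ p ∈ N, ∃ m ∈ D, p ∉ m := by
    intro p hp
    by_contra h
    push_neg at h
    obtain ⟨q, hq, q', hq', hqq'⟩ := Finset.one_lt_card.mp (hcard l₁ hl₁)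
    have hq1 : q ∈ N := hsub l₁ hl₁ hq
    have hq'1 : q' ∈ N := hsub l₁ hl₁ hq'
    -- one of q, q' differs from p; call it r ∈ l₁, r ≠ p
    obtain ⟨r, hr, hrN, hrp⟩ : ∃ r ∈ l₁, r ∈ N ∧ r ≠ p := by
      rcases eq_or_ne q p with rfl | h1
      · exact ⟨q', hq', hq'1, fun e => hqq' e.symm⟩
      · exact ⟨q, hq, hq1, h1⟩
    obtain ⟨s, hs, s', hs', hss'⟩ := Finset.one_lt_card.mp (hcard l₂ hl₂)
    have hs1 : s ∈ N := hsub l₂ hl₂ hs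
    have hs'1 : s' ∈ N := hsub l₂ hl₂ hs'
    obtain ⟨t, ht, htN, htp⟩ : ∃ t ∈ l₂, t ∈ N ∧ t ≠ p := by
      rcases eq_or_ne s p with rfl | h1
      · exact ⟨s', hs', hs'1, fun e => hss' e.symm⟩
      · exact ⟨s, hs, hs1, h1⟩
    have hrt : r ≠ t := by
      rintro rfl
      exact hne (huniq hrN hp hrp hl₁ hr (h l₁ hl₁)
        hl₂ ht (h l₂ hl₂))
    obtain ⟨m, ⟨hm, hrm, htm⟩, -⟩ := hunique r hrN t htN hrt
    have e1 : m = l₁ := huniq hp hrN (Ne.symm hrp) hm (h m hm) hrm hl₁ (h l₁ hl₁) hr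
    have e2 : m = l₂ := huniq hp htN (Ne.symm htp) hm (h m hm) htm hl₂ (h l₂ hl₂) ht
    exact hne (e1 ▸ e2)
  -- set up the configuration
  let P := {x // x ∈ N}
  let L := {l // l ∈ D}
  letI : Membership P L := ⟨fun l p => p.1 ∈ l.1⟩
  haveI : Configuration.Nondegenerate P L := by
    constructor
    · rintro ⟨m, hm⟩
      obtain ⟨x, hx, hx'⟩ := hproper m hm
      exact ⟨⟨x, hx⟩, hx'⟩
    · rintro ⟨p, hp⟩
      obtain ⟨m, hm, hm'⟩ := hmiss p hp
      exact ⟨⟨m, hm⟩, hm'⟩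
    · rintro ⟨p, hp⟩ ⟨q, hq⟩ ⟨m, hm⟩ ⟨m', hm'⟩ h1 h2 h3 h4
      rcases eq_or_ne p q with rfl | hpq
      · exact Or.inl rfl
      · exact Or.inr (Subtype.ext (huniq hp hq hpq hm h1 h2 hm' h3 h4))
  haveI : Configuration.HasLines P L :=
    { mkLine := fun {p q} h =>
        ⟨Classical.choose (hunique p.1 p.2 q.1 q.2 (fun e => h (Subtype.ext e))),
         (Classical.choose_spec (hunique p.1 p.2 q.1 q.2 (fun e => h (Subtype.ext e)))).1.1⟩
      mkLine_ax := fun {p q} h =>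
        ⟨(Classical.choose_spec (hunique p.1 p.2 q.1 q.2 (fun e => h (Subtype.ext e)))).1.2.1,
         (Classical.choose_spec (hunique p.1 p.2 q.1 q.2 (fun e => h (Subtype.ext e)))).1.2.2⟩ }
  have := Configuration.HasLines.card_le (P := P) (L := L)
  simpa [P, L, Fintype.card_coe] using this
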